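/- Let L be a real topological vector space. Then c₀(L) is a linear subspace of L^ℕ, and F₀(L) (c₀(L) with the uniform topology) is again a real topological vector space; that is, addition and scalar multiplication ℝ × c₀(L) → c₀(L) are continuous for the uniform topology. -/

import Mathlib

open Filter Topology Set

/-- The linear subspace of `L^ℕ` consisting of all null sequences in a real topological
vector space `L`. -/
def c0Submodule (L : Type*) [AddCommGroup L] [Module ℝ L] [TopologicalSpace L]
    [IsTopologicalAddGroup L] [ContinuousSMul ℝ L] : Submodule ℝ (ℕ → L) where
  carrier := {x : ℕ → L | Tendsto x atTop (𝓝 0)}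
  zero_mem' := tendsto_const_nhds
  add_mem' := fun ha hb => by have h := ha.add hb; rw [add_zero] at h; exact h
  smul_mem' := fun c x hx => by have h := hx.const_smul c; rw [smul_zero] at h; exact h

/-- The uniform topology on `c0Submodule L`: induced by the topology of uniform convergence
on `ℕ → L`, where `L` carries its canonical group uniformity. -/
instance F0TopologyTVS (L : Type*) [AddCommGroup L] [Module ℝ L] [TopologicalSpace L]
    [IsTopologicalAddGroup L] [ContinuousSMul ℝ L] : TopologicalSpace (c0Submodule L) :=
  letI : UniformSpace L := IsTopologicalAddGroup.rightUniformSpace L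
  TopologicalSpace.induced (fun x : c0Submodule L => UniformFun.ofFun (x : ℕ → L))
    inferInstance

/-- Let `L` be a real topological vector space. Then `c₀(L)` is a linear subspace of `L^ℕ`
(in particular it is closed under scalar multiplication), and `F₀(L)` (that is, `c₀(L)` with
the uniform topology) is again a real topological vector space: addition and scalar
multiplication `ℝ × c₀(L) → c₀(L)` are continuous for the uniform topology. -/
theorem c0_of_tvs_is_tvs (L : Type*) [AddCommGroup L] [Module ℝ L] [TopologicalSpace L]
    [IsTopologicalAddGroup L] [ContinuousSMul ℝ L] :
    (∀ (c : ℝ) (x : ℕ → L), Tendsto x atTop (𝓝 0) → Tendsto (c • x) atTop (𝓝 0)) ∧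
      ContinuousAdd (c0Submodule L) ∧ ContinuousSMul ℝ (c0Submodule L) := by
  letI : UniformSpace L := IsTopologicalAddGroup.rightUniformSpace L
  haveI : IsUniformAddGroup L := isUniformAddGroup_of_addCommGroup
  set ι : c0Submodule L → (UniformFun ℕ L) :=
    fun x : c0Submodule L => UniformFun.ofFun (x : ℕ → L) with hι
  have hind : IsInducing ι := ⟨rfl⟩
  refine ⟨fun c x hx => by have h := hx.const_smul c; rw [smul_zero] at h; exact h, ?_, ?_⟩
  · -- ContinuousAdd
    exact hind.continuousAdd
      ({ toFun := ι, map_add' := fun a b => rfl } : AddHom (c0Submodule L) (UniformFun ℕ L))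
  · -- ContinuousSMul
    constructor
    rw [continuous_iff_continuousAt]
    rintro ⟨c₀, x₀⟩
    have key : Tendsto (fun p : ℝ × c0Submodule L => ι (p.1 • p.2)) (𝓝 (c₀, x₀))
        (𝓝 (ι (c₀ • x₀))) := by
      rw [(UniformFun.hasBasis_nhds ℕ L (ι (c₀ • x₀))).tendsto_right_iff]
      intro V hV
      -- extract an additive description of the entourage
      rw [uniformity_eq_comap_nhds_zero L, mem_comap] at hV
      obtain ⟨U, hU, hUV⟩ := hV
      obtain ⟨U', hU', hU'U⟩ := exists_nhds_zero_half hU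
      -- continuity of smul at (c₀, 0)
      have h1 : Tendsto (fun q : ℝ × L => q.1 • q.2) (𝓝 (c₀, (0 : L))) (𝓝 0) := by
        simpa using ((continuous_smul : Continuous fun q : ℝ × L => q.1 • q.2).tendsto (c₀, (0 : L)))
      have h1' : (fun q : ℝ × L => q.1 • q.2) ⁻¹' U' ∈ 𝓝 c₀ ×ˢ 𝓝 (0 : L) := by
        rw [← nhds_prod_eq]; exact h1 hU'
      obtain ⟨T₁, hT₁, W₁, hW₁, hTW₁⟩ := mem_prod_iff.1 h1'
      -- continuity of smul at (0, 0)
      have h2 : Tendsto (fun q : ℝ × L => q.1 • q.2) (𝓝 ((0 : ℝ), (0 : L))) (𝓝 0) := by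
        simpa using ((continuous_smul : Continuous fun q : ℝ × L => q.1 • q.2).tendsto ((0 : ℝ), (0 : L)))
      have h2' : (fun q : ℝ × L => q.1 • q.2) ⁻¹' U' ∈ 𝓝 (0 : ℝ) ×ˢ 𝓝 (0 : L) := by
        rw [← nhds_prod_eq]; exact h2 hU'
      obtain ⟨S₂, hS₂, W₂, hW₂, hSW₂⟩ := mem_prod_iff.1 h2'
      -- the tail of x₀ is in W₂
      obtain ⟨N, hN⟩ := eventually_atTop.1 (x₀.2.eventually_mem hW₂)
      -- head terms: eventually small
      have hhead : ∀ᶠ s : ℝ in 𝓝 0, ∀ n ∈ Set.Iio N, s • (x₀ : ℕ → L) n ∈ U' := by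
        rw [eventually_all_finite (Set.finite_Iio N)]
        intro n _
        have : Tendsto (fun s : ℝ => s • (x₀ : ℕ → L) n) (𝓝 0) (𝓝 0) := by
          have h := ((continuous_id.smul
            (continuous_const (y := (x₀ : ℕ → L) n))).tendsto (0 : ℝ))
          exact h.mono_right (le_of_eq (by simp))
        exact this hU'
      -- eventual condition in the first coordinate
      have hEt : ∀ᶠ t : ℝ in 𝓝 c₀, t ∈ T₁ ∧ (t - c₀) ∈ S₂ ∧
          ∀ n ∈ Set.Iio N, (t - c₀) • (x₀ : ℕ → L) n ∈ U' := by
        have hsub : Tendsto (fun t : ℝ => t - c₀) (𝓝 c₀) (𝓝 0) := by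
          have h := (continuous_id.sub (continuous_const (y := c₀))).tendsto c₀
          simp only [Pi.sub_apply, id_eq, sub_self] at h; exact h
        exact (eventually_mem_set.2 hT₁).and
          ((hsub.eventually_mem hS₂).and (hsub.eventually hhead))
      -- eventual condition in the second coordinate
      have hEx : ∀ᶠ x : c0Submodule L in 𝓝 x₀,
          ∀ n, (x : ℕ → L) n - (x₀ : ℕ → L) n ∈ W₁ := by
        have hV₁ : {q : L × L | q.2 - q.1 ∈ W₁} ∈ uniformity L := by
          rw [uniformity_eq_comap_nhds_zero L]; exact preimage_mem_comap hW₁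
        have hmem : {g : UniformFun ℕ L | (ι x₀, g) ∈ UniformFun.gen ℕ L {q : L × L | q.2 - q.1 ∈ W₁}}
            ∈ 𝓝 (ι x₀) := (UniformFun.hasBasis_nhds ℕ L (ι x₀)).mem_of_mem hV₁
        have := hind.continuous.continuousAt (x := x₀) hmem
        exact (eventually_mem_set.2 this).mono (fun x hx n => hx n)
      rw [nhds_prod_eq]
      refine (hEt.prod_mk hEx).mono ?_
      rintro ⟨t, x⟩ ⟨⟨htT, htS, hthead⟩, hx⟩ n
      apply hUV
      show t • (x : ℕ → L) n - c₀ • (x₀ : ℕ → L) n ∈ U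
      have hdecomp : t • (x : ℕ → L) n - c₀ • (x₀ : ℕ → L) n =
          t • ((x : ℕ → L) n - (x₀ : ℕ → L) n) + (t - c₀) • (x₀ : ℕ → L) n := by
        rw [smul_sub, sub_smul]; abel
      rw [hdecomp]
      refine hU'U _ ?_ _ ?_
      · exact hTW₁ (Set.mk_mem_prod htT (hx n))
      · rcases lt_or_ge n N with hn | hn
        · exact hthead n hn
        · exact hSW₂ (Set.mk_mem_prod htS (hN n hn))
    exact hind.tendsto_nhds_iff.2 key
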